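/- For every complex number s, every complex z with k·z² = s² + d·s, and assuming η ≠ 0, the functions h₁, h₂ : ℝ → ℂ defined by h₁(x) = (k·z/η)·sinh(z·(ℓ − x)) + (𝔤·s/η)·sinh(z·(𝔭 − x))·sinh(z·(ℓ − 𝔭)) and h₂(x) = (k·z/η)·sinh(z·(ℓ − x)) satisfy the boundary and interface conditions of the boundary-forcing problem with unit input: h₁(0) = 1, h₂(ℓ) = 0, h₁(𝔭) = h₂(𝔭), and 𝔤·s·h₁(𝔭) = k·(h₂'(𝔭) − h₁'(𝔭)), where h₁' and h₂' denote the derivatives of h₁ and h₂. -/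
import Mathlib

lemma sinh_shift_hasDerivAt (z c : ℂ) (x : ℝ) :
    HasDerivAt (fun t : ℝ => Complex.sinh (z * (c - (t : ℂ))))
      (-(z * Complex.cosh (z * (c - (x : ℂ))))) x := by
  have h1 : HasDerivAt (fun w : ℂ => Complex.sinh (z * (c - w)))
      (Complex.cosh (z * (c - (x : ℂ))) * (z * (-1))) (x : ℂ) := by
    exact (Complex.hasDerivAt_sinh _).comp _
      (((hasDerivAt_id ((x : ℝ) : ℂ)).const_sub c).const_mul z)
  have := h1.comp_ofReal
  convert this using 1
  ring

/-- The two branches of the boundary-forcing displacement transfer function satisfy the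
boundary and interface conditions of the boundary-forcing problem with unit input. -/
theorem boundary_forcing_branches_boundary_interface
    (ℓ k d p g : ℝ) (hℓ : 0 < ℓ) (hk : 0 < k) (hd : 0 < d)
    (hp0 : 0 < p) (hpℓ : p < ℓ) (hg : 0 ≤ g)
    (s z : ℂ) (hz : (k : ℂ) * z ^ 2 = s ^ 2 + (d : ℂ) * s)
    (η : ℂ)
    (hη : η = (k : ℂ) * z * Complex.sinh (z * (ℓ : ℂ)) +
      (g : ℂ) * s * Complex.sinh (z * (p : ℂ)) * Complex.sinh (z * ((ℓ : ℂ) - (p : ℂ))))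
    (hη0 : η ≠ 0)
    (h₁ h₂ : ℝ → ℂ)
    (hh₁ : h₁ = fun x : ℝ => ((k : ℂ) * z / η) * Complex.sinh (z * ((ℓ : ℂ) - (x : ℂ))) +
      ((g : ℂ) * s / η) * Complex.sinh (z * ((p : ℂ) - (x : ℂ))) *
        Complex.sinh (z * ((ℓ : ℂ) - (p : ℂ))))
    (hh₂ : h₂ = fun x : ℝ => ((k : ℂ) * z / η) * Complex.sinh (z * ((ℓ : ℂ) - (x : ℂ)))) :
    h₁ 0 = 1 ∧ h₂ ℓ = 0 ∧ h₁ p = h₂ p ∧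
      (g : ℂ) * s * h₁ p = (k : ℂ) * (deriv h₂ p - deriv h₁ p) := by
  have hd1 : HasDerivAt h₁
      (((k : ℂ) * z / η) * -(z * Complex.cosh (z * ((ℓ : ℂ) - (p : ℂ)))) +
        (((g : ℂ) * s / η) * -(z * Complex.cosh (z * ((p : ℂ) - (p : ℂ))))) *
          Complex.sinh (z * ((ℓ : ℂ) - (p : ℂ)))) p := by
    rw [hh₁]
    exact (((sinh_shift_hasDerivAt z ℓ p).const_mul _).add
      (((sinh_shift_hasDerivAt z p p).const_mul _).mul_const _))
  have hd2 : HasDerivAt h₂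
      (((k : ℂ) * z / η) * -(z * Complex.cosh (z * ((ℓ : ℂ) - (p : ℂ))))) p := by
    rw [hh₂]
    exact (sinh_shift_hasDerivAt z ℓ p).const_mul _
  refine ⟨?_, ?_, ?_, ?_⟩
  · simp only [hh₁]
    push_cast
    rw [sub_zero, sub_zero]
    rw [hη]
    field_simp
    exact div_self (hη ▸ hη0)
  · simp [hh₂]
  · simp [hh₁, hh₂]
  · rw [hd1.deriv, hd2.deriv, hh₁]
    simp only [sub_self, mul_zero, Complex.cosh_zero, Complex.sinh_zero, mul_one]
    field_simp
    ring
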